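/- Let X = {x_1,...,x_a} and X' = {x'_1,...,x'_a} be disjoint alphabets and u_1,...,u_a formal variables. With v_k := (-1)^{k-1} Σ_{l=k}^{a} e_{l-k}(X) u_l and h_l(X−X') := Σ_{p+q=l} (-1)^q h_p(X) e_q(X'), one has in k[X,X',u_1,...,u_a]: Σ_{l=1}^{a} (e_l(X) − e_l(X')) u_l = Σ_{l=1}^{a} h_l(X−X') v_l. -/

import Mathlib

open Finset

variable {R : Type*} [CommRing R]

/-- The elementary symmetric polynomial `e k` of a finite family of ring elements. -/
def esym {ι : Type*} [Fintype ι] [DecidableEq ι] (x : ι → R) (k : ℕ) : R :=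
  ∑ s ∈ Finset.univ.powersetCard k, ∏ i ∈ s, x i

/-- The complete homogeneous symmetric polynomial `h k` of a finite family of ring
elements (sum of all monomials of degree `k`). -/
def hsym {ι : Type*} [Fintype ι] [DecidableEq ι] (x : ι → R) (k : ℕ) : R :=
  ∑ μ : Sym ι k, (μ.1.map x).prod

/-- The hook Schur polynomial `s(i,j) = s_{(i+1,1^j)}` of a finite family. -/
def hookS {ι : Type*} [Fintype ι] [DecidableEq ι] (x : ι → R) (i j : ℕ) : R :=
  ∑ p ∈ Finset.HasAntidiagonal.antidiagonal j, (-1 : R) ^ p.1 * hsym x (i + p.1 + 1) * esym x p.2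

/-- The complete symmetric function `h j` of the difference alphabet `X - X'`. -/
def hdiff {ι κ : Type*} [Fintype ι] [DecidableEq ι] [Fintype κ] [DecidableEq κ]
    (x : ι → R) (x' : κ → R) (j : ℕ) : R :=
  ∑ p ∈ Finset.HasAntidiagonal.antidiagonal j, (-1 : R) ^ p.2 * hsym x p.1 * esym x' p.2

/-- The elementary symmetric function `e j` of the difference alphabet `X - X'`. -/
def ediff {ι κ : Type*} [Fintype ι] [DecidableEq ι] [Fintype κ] [DecidableEq κ]
    (x : ι → R) (x' : κ → R) (j : ℕ) : R :=
  ∑ p ∈ Finset.HasAntidiagonal.antidiagonal j, (-1 : R) ^ p.2 * esym x p.1 * hsym x' p.2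

/-- The power sum `p k` of a finite family of ring elements. -/
def psum' {ι : Type*} [Fintype ι] (x : ι → R) (k : ℕ) : R :=
  ∑ i, x i ^ k

/-- The elementary symmetric polynomial of a multiset of ring elements. -/
def esymM (s : Multiset R) (k : ℕ) : R :=
  ((s.powersetCard k).map Multiset.prod).sum

/-! ### Auxiliary lemmas (power series generating function approach) -/

section Aux

lemma aux_one_sub_mul_mk (r : R) :
    (1 - PowerSeries.C r * PowerSeries.X) * PowerSeries.mk (fun k => r ^ k) = 1 := by
  ext n
  cases n with
  | zero => simp
  | succ n =>
    rw [sub_mul, one_mul, map_sub, mul_assoc, PowerSeries.coeff_C_mul,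
      PowerSeries.coeff_succ_X_mul, PowerSeries.coeff_mk, PowerSeries.coeff_mk, pow_succ,
      mul_comm, sub_self]
    simp

lemma aux_coeff_prod_one_sub {ι : Type*} [DecidableEq ι] (x : ι → R) (s : Finset ι) (q : ℕ) :
    (PowerSeries.coeff q) (∏ i ∈ s, (1 - PowerSeries.C (x i) * PowerSeries.X)) =
      (-1 : R) ^ q * ∑ t ∈ s.powersetCard q, ∏ i ∈ t, x i := by
  induction s using Finset.induction_on generalizing q with
  | empty =>
    cases q with
    | zero => simp
    | succ q =>
      rw [Finset.prod_empty, show ((∅ : Finset ι).powersetCard (q+1)) = ∅ by simp]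
      simp [PowerSeries.coeff_one]
  | @insert a s ha ih =>
    rw [Finset.prod_insert ha]
    cases q with
    | zero =>
      simp only [pow_zero, one_mul, Finset.powersetCard_zero, Finset.sum_singleton,
        Finset.prod_empty]
      rw [PowerSeries.coeff_zero_eq_constantCoeff_apply, map_mul, map_prod]
      simp
    | succ q =>
      have hins : ∀ t ∈ s.powersetCard q, a ∉ t :=
        fun t ht h => ha ((Finset.mem_powersetCard.mp ht).1 h)
      rw [sub_mul, one_mul, map_sub, mul_assoc, PowerSeries.coeff_C_mul,
        PowerSeries.coeff_succ_X_mul, ih, ih, Finset.powersetCard_succ_insert ha,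
        Finset.sum_union, Finset.sum_image, Finset.sum_congr rfl
          (fun t ht => Finset.prod_insert (hins t ht)), ← Finset.mul_sum]
      · ring
      · intro t ht u hu htu
        rw [← Finset.erase_insert (hins t ht), ← Finset.erase_insert (hins u hu), htu]
      · rw [Finset.disjoint_left]
        intro t ht htimg
        obtain ⟨u, hu, rfl⟩ := Finset.mem_image.mp htimg
        exact ha ((Finset.mem_powersetCard.mp ht).1 (Finset.mem_insert_self a u))

lemma aux_multiset_prod_map_eq {ι : Type*} [Fintype ι] [DecidableEq ι] (x : ι → R)
    (m : Multiset ι) : (m.map x).prod = ∏ i, x i ^ m.count i := by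
  rw [Finset.prod_multiset_map_count]
  refine Finset.prod_subset (Finset.subset_univ _) fun i _ hi => ?_
  rw [Multiset.mem_toFinset] at hi
  rw [Multiset.count_eq_zero_of_notMem hi, pow_zero]

lemma aux_sum_count_eq_card {ι : Type*} [Fintype ι] [DecidableEq ι] (m : Multiset ι) :
    ∑ i, m.count i = Multiset.card m :=
  Multiset.sum_count_eq_card fun a _ => Finset.mem_univ a

lemma aux_coeff_prod_mk {ι : Type*} [Fintype ι] [DecidableEq ι] (x : ι → R) (p : ℕ) :
    (PowerSeries.coeff p) (∏ i, PowerSeries.mk (fun k => x i ^ k)) = hsym x p := by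
  rw [PowerSeries.coeff_prod, hsym]
  refine Finset.sum_bij' (fun l hl => (⟨Finsupp.toMultiset l, ?_⟩ : Sym ι p))
    (fun μ _ => Multiset.toFinsupp μ.1) ?_ ?_ ?_ ?_ ?_
  · have h := (Finset.mem_finsuppAntidiag.mp hl).1
    rw [← h, show Multiset.card (Finsupp.toMultiset l) = ∑ i, (Finsupp.toMultiset l).count i from
      (aux_sum_count_eq_card _).symm]
    exact Finset.sum_congr rfl fun i _ => by rw [Finsupp.count_toMultiset]
  · intro l hl; exact Finset.mem_univ _
  · intro μ _
    rw [Finset.mem_finsuppAntidiag]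
    refine ⟨?_, Finset.subset_univ _⟩
    rw [show Finset.univ.sum (Multiset.toFinsupp μ.1) = ∑ i, μ.1.count i from
      Finset.sum_congr rfl fun i _ => by rw [Multiset.toFinsupp_apply]]
    rw [aux_sum_count_eq_card, μ.2]
  · intro l hl
    exact Finsupp.toMultiset_toFinsupp l
  · intro μ _
    exact Subtype.ext (Multiset.toFinsupp_toMultiset _)
  · intro l hl
    simp only
    rw [aux_multiset_prod_map_eq]
    exact Finset.prod_congr rfl fun i _ => by
      rw [PowerSeries.coeff_mk, Finsupp.count_toMultiset]

variable {ι : Type*} [Fintype ι] [DecidableEq ι]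

/-- The generating series `∏ (1 - x i t)`. -/
noncomputable def Aser (x : ι → R) : PowerSeries R :=
  ∏ i, (1 - PowerSeries.C (x i) * PowerSeries.X)

/-- The generating series `∏ (1 - x i t)⁻¹`. -/
noncomputable def Hser (x : ι → R) : PowerSeries R :=
  ∏ i, PowerSeries.mk (fun k => x i ^ k)

lemma coeff_Aser (x : ι → R) (q : ℕ) :
    (PowerSeries.coeff q) (Aser x) = (-1 : R) ^ q * esym x q :=
  aux_coeff_prod_one_sub x Finset.univ q

lemma coeff_Hser (x : ι → R) (p : ℕ) :
    (PowerSeries.coeff p) (Hser x) = hsym x p :=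
  aux_coeff_prod_mk x p

lemma Aser_mul_Hser (x : ι → R) : Aser x * Hser x = 1 := by
  rw [Aser, Hser, ← Finset.prod_mul_distrib]
  rw [Finset.prod_congr rfl fun i _ => aux_one_sub_mul_mk (x i)]
  exact Finset.prod_const_one

lemma hdiff_eq_coeff {κ : Type*} [Fintype κ] [DecidableEq κ]
    (x : ι → R) (x' : κ → R) (k : ℕ) :
    hdiff x x' k = (PowerSeries.coeff k) (Hser x * Aser x') := by
  rw [PowerSeries.coeff_mul, hdiff]
  refine Finset.sum_congr rfl fun p _ => ?_
  rw [coeff_Hser, coeff_Aser]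
  ring

lemma hsym_zero' (x : ι → R) : hsym x 0 = 1 := by
  have := coeff_Hser x 0
  rw [PowerSeries.coeff_zero_eq_constantCoeff_apply, Hser, map_prod] at this
  simp only [PowerSeries.constantCoeff_mk, pow_zero, Finset.prod_const_one] at this
  exact this.symm

lemma esym_zero' (x : ι → R) : esym x 0 = 1 := by
  simp [esym]

lemma hdiff_zero {κ : Type*} [Fintype κ] [DecidableEq κ] (x : ι → R) (x' : κ → R) :
    hdiff x x' 0 = 1 := by
  simp [hdiff, hsym_zero', esym_zero']

lemma claimC {κ : Type*} [Fintype κ] [DecidableEq κ] (x : ι → R) (x' : κ → R) (l : ℕ) :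
    ∑ k ∈ Finset.range (l + 1), (-1 : R) ^ k * hdiff x x' k * esym x (l - k)
      = esym x' l := by
  have key : Hser x * Aser x' * Aser x = Aser x' := by
    rw [show Hser x * Aser x' * Aser x = Aser x' * (Aser x * Hser x) by ring,
      Aser_mul_Hser, mul_one]
  have h1 := congrArg (PowerSeries.coeff l) key
  rw [PowerSeries.coeff_mul, Finset.Nat.sum_antidiagonal_eq_sum_range_succ
    (fun p q => (PowerSeries.coeff p) (Hser x * Aser x') * (PowerSeries.coeff q) (Aser x)),
    coeff_Aser] at h1
  have h1' : ∑ k ∈ Finset.range (l + 1),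
      hdiff x x' k * ((-1 : R) ^ (l - k) * esym x (l - k)) = (-1 : R) ^ l * esym x' l := by
    rw [← h1]
    exact Finset.sum_congr rfl fun k _ => by rw [hdiff_eq_coeff, coeff_Aser]
  have h2 := congrArg (fun z => (-1 : R) ^ l * z) h1'
  rw [Finset.mul_sum] at h2
  calc ∑ k ∈ Finset.range (l + 1), (-1 : R) ^ k * hdiff x x' k * esym x (l - k)
      = ∑ k ∈ Finset.range (l + 1),
          (-1 : R) ^ l * (hdiff x x' k * ((-1 : R) ^ (l - k) * esym x (l - k))) := by
        refine Finset.sum_congr rfl fun k hk => ?_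
        have hkl : k ≤ l := by
          have := Finset.mem_range.mp hk; omega
        have hpow : (-1 : R) ^ (l - k) * (-1 : R) ^ k = (-1 : R) ^ l := by
          rw [← pow_add, Nat.sub_add_cancel hkl]
        have hsq : (-1 : R) ^ (l - k) * (-1 : R) ^ (l - k) = 1 := by
          rw [← mul_pow]; norm_num
        calc (-1 : R) ^ k * hdiff x x' k * esym x (l - k)
            = ((-1 : R) ^ (l - k) * (-1 : R) ^ (l - k)) *
              ((-1 : R) ^ k * hdiff x x' k * esym x (l - k)) := by rw [hsq, one_mul]
          _ = ((-1 : R) ^ (l - k) * (-1 : R) ^ k) *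
              (hdiff x x' k * ((-1 : R) ^ (l - k) * esym x (l - k))) := by ring
          _ = (-1 : R) ^ l * (hdiff x x' k * ((-1 : R) ^ (l - k) * esym x (l - k))) := by
              rw [hpow]
    _ = (-1 : R) ^ l * ((-1 : R) ^ l * esym x' l) := h2
    _ = esym x' l := by
        rw [← mul_assoc, ← mul_pow]; norm_num

lemma keyE {κ : Type*} [Fintype κ] [DecidableEq κ] (x : ι → R) (x' : κ → R) {l : ℕ}
    (hl : 1 ≤ l) :
    esym x l - esym x' l
      = ∑ k ∈ Finset.Icc 1 l, (-1 : R) ^ (k - 1) * hdiff x x' k * esym x (l - k) := by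
  have hsplit : Finset.range (l + 1) = insert 0 (Finset.Icc 1 l) := by
    ext m
    simp only [Finset.mem_range, Finset.mem_insert, Finset.mem_Icc]
    omega
  have hC := claimC x x' l
  rw [hsplit, Finset.sum_insert (by simp)] at hC
  simp only [pow_zero, one_mul, hdiff_zero, Nat.sub_zero] at hC
  have hC' : ∑ k ∈ Finset.Icc 1 l, (-1 : R) ^ k * hdiff x x' k * esym x (l - k)
      = esym x' l - esym x l := by linear_combination hC
  rw [show ∑ k ∈ Finset.Icc 1 l, (-1 : R) ^ (k - 1) * hdiff x x' k * esym x (l - k)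
      = -∑ k ∈ Finset.Icc 1 l, (-1 : R) ^ k * hdiff x x' k * esym x (l - k) by
    rw [← Finset.sum_neg_distrib]
    refine Finset.sum_congr rfl fun k hk => ?_
    obtain ⟨j, rfl⟩ : ∃ j, k = j + 1 := ⟨k - 1, by
      have := (Finset.mem_Icc.mp hk).1; omega⟩
    simp only [Nat.add_sub_cancel, pow_succ]
    ring]
  rw [hC']
  ring

end Aux

theorem curvature_change_of_variables (a : ℕ) (x x' : Fin a → R) (u v : ℕ → R)
    (hv : ∀ k ∈ Finset.Icc 1 a,
      v k = (-1 : R) ^ (k - 1) * ∑ l ∈ Finset.Icc k a, esym x (l - k) * u l) :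
    ∑ l ∈ Finset.Icc 1 a, (esym x l - esym x' l) * u l =
      ∑ l ∈ Finset.Icc 1 a, hdiff x x' l * v l := by
  have hrhs : ∑ l ∈ Finset.Icc 1 a, hdiff x x' l * v l
      = ∑ k ∈ Finset.Icc 1 a,
        hdiff x x' k * ((-1 : R) ^ (k - 1) * ∑ l ∈ Finset.Icc k a, esym x (l - k) * u l) :=
    Finset.sum_congr rfl fun k hk => by rw [hv k hk]
  rw [hrhs]
  have step1 : ∑ k ∈ Finset.Icc 1 a,
      hdiff x x' k * ((-1 : R) ^ (k - 1) * ∑ l ∈ Finset.Icc k a, esym x (l - k) * u l)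
      = ∑ k ∈ Finset.Icc 1 a, ∑ l ∈ Finset.Icc k a,
          ((-1 : R) ^ (k - 1) * hdiff x x' k * esym x (l - k)) * u l := by
    refine Finset.sum_congr rfl fun k _ => ?_
    rw [Finset.mul_sum, Finset.mul_sum]
    exact Finset.sum_congr rfl fun l _ => by ring
  rw [step1, Finset.sum_comm' (s := Finset.Icc 1 a) (t := fun k => Finset.Icc k a)
    (t' := Finset.Icc 1 a) (s' := fun l => Finset.Icc 1 l)
    (fun k l => by simp only [Finset.mem_Icc]; omega)]
  refine Finset.sum_congr rfl fun l hl => ?_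
  rw [← Finset.sum_mul, ← keyE x x' (Finset.mem_Icc.mp hl).1]
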